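/- Let E be a finite-dimensional real inner product space and w* ∈ E with ‖w*‖ = 1, and define F : E → ℝ by F(u) = ‖u‖² − ⟨u, w*⟩² + (3/4)(‖u‖² − 1)². Then for every u ∈ E: (1) the gradient of F at u equals 2u − 2⟨u, w*⟩w* + 3(‖u‖² − 1)u; (2) ⟨w*, ∇F(u)⟩ = 3(‖u‖² − 1)⟨u, w*⟩; and (3) ‖∇F(u)‖² = 12‖u‖²·F(u) − 8(‖u‖² − ⟨u, w*⟩²). -/

import Mathlib

open RealInnerProductSpace

theorem grad_aux
    {E : Type*} [NormedAddCommGroup E] [InnerProductSpace ℝ E] [FiniteDimensional ℝ E]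
    (wstar : E) (F : E → ℝ)
    (hFdef : ∀ u : E, F u = ‖u‖ ^ 2 - ⟪u, wstar⟫ ^ 2 + (3 / 4) * (‖u‖ ^ 2 - 1) ^ 2)
    (u : E) :
    HasGradientAt F ((2 : ℝ) • u - (2 * ⟪u, wstar⟫) • wstar + (3 * (‖u‖ ^ 2 - 1)) • u) u := by
  have h1 : HasFDerivAt (fun x : E => ⟪x, x⟫) _ u :=
    (hasFDerivAt_id u).inner ℝ (hasFDerivAt_id u)
  have h2 : HasFDerivAt (fun x : E => ⟪x, wstar⟫) _ u :=
    (hasFDerivAt_id u).inner ℝ (hasFDerivAt_const wstar u)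
  have hF : HasFDerivAt (fun x : E => ⟪x, x⟫ - ⟪x, wstar⟫ * ⟪x, wstar⟫
      + (3 / 4) * ((⟪x, x⟫ - 1) * (⟪x, x⟫ - 1))) _ u :=
    (h1.sub (h2.mul h2)).add (((h1.sub_const 1).mul (h1.sub_const 1)).const_mul (3/4))
  have hFeq : F = fun x : E => ⟪x, x⟫ - ⟪x, wstar⟫ * ⟪x, wstar⟫
      + (3 / 4) * ((⟪x, x⟫ - 1) * (⟪x, x⟫ - 1)) := by
    funext x
    rw [hFdef x, real_inner_self_eq_norm_sq]
    ring
  rw [hasGradientAt_iff_hasFDerivAt, hFeq]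
  refine hF.congr_fderiv ?_
  ext v
  simp [inner_sub_left, inner_add_left, inner_smul_left, inner_smul_right,
    real_inner_comm u v, real_inner_comm wstar v, real_inner_self_eq_norm_sq]
  ring

/-- Gradient identities for the phase-retrieval population loss. -/
theorem phase_retrieval_gradient_identities
    {E : Type*} [NormedAddCommGroup E] [InnerProductSpace ℝ E] [FiniteDimensional ℝ E]
    (wstar : E) (hws : ‖wstar‖ = 1)
    (F : E → ℝ)
    (hFdef : ∀ u : E, F u = ‖u‖ ^ 2 - ⟪u, wstar⟫ ^ 2 + (3 / 4) * (‖u‖ ^ 2 - 1) ^ 2) :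
    ∀ u : E,
      gradient F u =
        (2 : ℝ) • u - (2 * ⟪u, wstar⟫) • wstar + (3 * (‖u‖ ^ 2 - 1)) • u ∧
      ⟪wstar, gradient F u⟫ = 3 * (‖u‖ ^ 2 - 1) * ⟪u, wstar⟫ ∧
      ‖gradient F u‖ ^ 2 = 12 * ‖u‖ ^ 2 * F u - 8 * (‖u‖ ^ 2 - ⟪u, wstar⟫ ^ 2) := by
  intro u
  have hgrad := (grad_aux wstar F hFdef u).gradient
  have hww : ⟪wstar, wstar⟫ = (1 : ℝ) := by
    rw [real_inner_self_eq_norm_sq, hws]; norm_num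
  refine ⟨hgrad, ?_, ?_⟩
  · rw [hgrad]
    simp [inner_sub_right, inner_add_right, inner_smul_right, hww, hws, real_inner_comm wstar u]
    try ring
  · have key : ∀ v : E, ‖v‖ ^ 2 = ⟪v, v⟫ := fun v => (real_inner_self_eq_norm_sq v).symm
    rw [hgrad, hFdef u]
    simp only [key, inner_sub_left, inner_add_left, inner_sub_right, inner_add_right,
      inner_smul_left, inner_smul_right, conj_trivial, hww, real_inner_comm wstar u]
    ring
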